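/- Let N, n, m be integers with 0 ≤ n ≤ N−1 and 1 ≤ m ≤ N, and put p := N−n and q := N−m. Let ρ1, ρ2, ρ12 be real numbers with ρ1 ≠ 1, ρ2 ≠ 1, D1 := 1+(p−1)ρ1 ≠ 0 and D2 := D1·(1+(q−1)ρ2) − p·q·ρ12² ≠ 0. Let R be the (p+q)×(p+q) block matrix [[ρ1·J_p + (1−ρ1)·I_p, ρ12·J_{p,q}], [ρ12·J_{q,p}, ρ2·J_q + (1−ρ2)·I_q]], and let B be the m×(p+q) matrix whose first p columns have all entries equal to ρ12 and whose last q columns have all entries equal to ρ2. Then R is invertible and 𝟙ᵀ · ((ρ2·J_m + (1−ρ2)·I_m) − B·R⁻¹·Bᵀ) · 𝟙 = φ(N,n,m,ρ1,ρ2,ρ12). -/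

import Mathlib

open Matrix

noncomputable section

/-- The all-ones matrix. -/
def J (a b : ℕ) : Matrix (Fin a) (Fin b) ℝ := Matrix.of fun _ _ => 1

/-- The two-layer Schur-complement quantity φ(N,n,m,ρ1,ρ2,ρ12) of the paper. -/
def phi (N n m : ℕ) (ρ1 ρ2 ρ12 : ℝ) : ℝ :=
  let D1 : ℝ := 1 + ((N : ℝ) - (n : ℝ) - 1) * ρ1
  let D2 : ℝ := D1 * (1 + ((N : ℝ) - (m : ℝ) - 1) * ρ2)
    - ((N : ℝ) - (m : ℝ)) * ((N : ℝ) - (n : ℝ)) * ρ12 ^ 2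
  (m : ℝ) * (1 + ((m : ℝ) - 1) * ρ2)
    - (m : ℝ) ^ 2 * ((N : ℝ) - (n : ℝ)) * ρ12 ^ 2 / D1
    - (m : ℝ) ^ 2 * ((N : ℝ) - (n : ℝ)) ^ 2 * ((N : ℝ) - (m : ℝ)) * ρ12 ^ 4 / (D1 * D2)
    + 2 * (m : ℝ) ^ 2 * ((N : ℝ) - (m : ℝ)) * ((N : ℝ) - (n : ℝ)) * ρ2 * ρ12 ^ 2 / D2
    - (m : ℝ) ^ 2 * ((N : ℝ) - (m : ℝ)) * ρ2 ^ 2 * D1 / D2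

/-- The structured block matrix R over `Fin p ⊕ Fin q`. -/
def Rmat (p q : ℕ) (ρ1 ρ2 ρ12 : ℝ) : Matrix (Fin p ⊕ Fin q) (Fin p ⊕ Fin q) ℝ :=
  Matrix.fromBlocks (ρ1 • J p p + (1 - ρ1) • 1) (ρ12 • J p q)
    (ρ12 • J q p) (ρ2 • J q q + (1 - ρ2) • 1)

/-- The m×(p+q) matrix whose first p columns are all ρ12 and last q columns all ρ2. -/
def Bmat (m p q : ℕ) (ρ12 ρ2 : ℝ) : Matrix (Fin m) (Fin p ⊕ Fin q) ℝ :=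
  Matrix.of fun _ j => Sum.elim (fun _ => ρ12) (fun _ => ρ2) j

lemma J_mul_J (a b c : ℕ) : J a b * J b c = (b : ℝ) • J a c := by
  ext i j
  simp [_root_.J, Matrix.mul_apply]

lemma diagblock (p q : ℕ) (x y u v w1 w2 : ℝ)
    (h0 : x*u*p + x*v + y*u + w1*w2*q = 0) (h1 : y*v = 1) :
    (x • J p p + y • (1:Matrix (Fin p) (Fin p) ℝ)) * (u • J p p + v • 1)
      + (w1 • J p q) * (w2 • J q p) = 1 := by
  have key : (x • J p p + y • (1:Matrix (Fin p) (Fin p) ℝ)) * (u • J p p + v • 1)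
      + (w1 • J p q) * (w2 • J q p)
      = (x*u*p + x*v + y*u + w1*w2*q) • J p p + (y*v) • (1:Matrix (Fin p) (Fin p) ℝ) := by
    simp only [Matrix.add_mul, Matrix.mul_add, Matrix.smul_mul, Matrix.mul_smul, J_mul_J,
      Matrix.mul_one, Matrix.one_mul, smul_smul]
    module
  rw [key, h0, h1]
  simp

lemma offblock (p q : ℕ) (x y u w z t : ℝ)
    (h : x*u*p + y*u + w*z*q + w*t = 0) :
    (x • J p p + y • (1:Matrix (Fin p) (Fin p) ℝ)) * (u • J p q)
      + (w • J p q) * (z • J q q + t • 1) = 0 := by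
  have key : (x • J p p + y • (1:Matrix (Fin p) (Fin p) ℝ)) * (u • J p q)
      + (w • J p q) * (z • J q q + t • 1)
      = (x*u*p + y*u + w*z*q + w*t) • J p q := by
    simp only [Matrix.add_mul, Matrix.mul_add, Matrix.smul_mul, Matrix.mul_smul, J_mul_J,
      Matrix.mul_one, Matrix.one_mul, smul_smul]
    module
  rw [key, h]
  simp

lemma offblock2 (p q : ℕ) (w u v x y z : ℝ)
    (h : w*u*p + w*v + x*z*q + y*z = 0) :
    (w • J q p) * (u • J p p + v • (1:Matrix (Fin p) (Fin p) ℝ))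
      + (x • J q q + y • (1:Matrix (Fin q) (Fin q) ℝ)) * (z • J q p) = 0 := by
  have key : (w • J q p) * (u • J p p + v • (1:Matrix (Fin p) (Fin p) ℝ))
      + (x • J q q + y • (1:Matrix (Fin q) (Fin q) ℝ)) * (z • J q p)
      = (w*u*p + w*v + x*z*q + y*z) • J q p := by
    simp only [Matrix.add_mul, Matrix.mul_add, Matrix.smul_mul, Matrix.mul_smul, J_mul_J,
      Matrix.mul_one, Matrix.one_mul, smul_smul]
    module
  rw [key, h]
  simp


lemma schur_x (P Q ρ1 ρ2 ρ12 : ℝ) (h1' : 1-ρ1 ≠ 0)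
    (hD2 : (1+(P-1)*ρ1)*(1+(Q-1)*ρ2) - P*Q*ρ12^2 ≠ 0) :
    ρ12*(((Q*ρ12^2 - ρ1*(1+(Q-1)*ρ2))/((1-ρ1)*((1+(P-1)*ρ1)*(1+(Q-1)*ρ2) - P*Q*ρ12^2)))*P)
        + ρ12*(1/(1-ρ1)) + ρ2*((-ρ12/((1+(P-1)*ρ1)*(1+(Q-1)*ρ2) - P*Q*ρ12^2))*Q)
    = ρ12*(1-ρ2)/((1+(P-1)*ρ1)*(1+(Q-1)*ρ2) - P*Q*ρ12^2) := by
  generalize hD : (1+(P-1)*ρ1)*(1+(Q-1)*ρ2) - P*Q*ρ12^2 = D at *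
  field_simp
  subst hD
  ring

lemma schur_y (P Q ρ1 ρ2 ρ12 : ℝ) (h2' : 1-ρ2 ≠ 0)
    (hD2 : (1+(P-1)*ρ1)*(1+(Q-1)*ρ2) - P*Q*ρ12^2 ≠ 0) :
    ρ12*((-ρ12/((1+(P-1)*ρ1)*(1+(Q-1)*ρ2) - P*Q*ρ12^2))*P)
      + ρ2*(((P*ρ12^2 - ρ2*(1+(P-1)*ρ1))/((1-ρ2)*((1+(P-1)*ρ1)*(1+(Q-1)*ρ2) - P*Q*ρ12^2)))*Q)
      + ρ2*(1/(1-ρ2))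
    = (ρ2*(1+(P-1)*ρ1) - P*ρ12^2)/((1+(P-1)*ρ1)*(1+(Q-1)*ρ2) - P*Q*ρ12^2) := by
  generalize hD : (1+(P-1)*ρ1)*(1+(Q-1)*ρ2) - P*Q*ρ12^2 = D at *
  field_simp
  subst hD
  ring

lemma final_scalar (mm P Q ρ1 ρ2 ρ12 : ℝ)
    (hD1 : 1 + (P-1)*ρ1 ≠ 0)
    (hD2 : (1+(P-1)*ρ1)*(1+(Q-1)*ρ2) - P*Q*ρ12^2 ≠ 0)
    (hD2a : (1+(P-1)*ρ1)*(1+(Q-1)*ρ2) - Q*P*ρ12^2 ≠ 0) :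
    mm^2*ρ2 + mm*(1-ρ2) - mm^2*((ρ12^2*P*(1-ρ2) + ρ2*Q*(ρ2*(1+(P-1)*ρ1) - P*ρ12^2))
        /((1+(P-1)*ρ1)*(1+(Q-1)*ρ2) - P*Q*ρ12^2))
    = mm * (1 + (mm - 1) * ρ2)
    - mm ^ 2 * P * ρ12 ^ 2 / (1 + (P - 1) * ρ1)
    - mm ^ 2 * P ^ 2 * Q * ρ12 ^ 4 /
        ((1 + (P-1) * ρ1) * ((1 + (P-1) * ρ1) * (1 + (Q-1) * ρ2) - Q * P * ρ12 ^ 2))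
    + 2 * mm ^ 2 * Q * P * ρ2 * ρ12 ^ 2 /
        ((1 + (P-1) * ρ1) * (1 + (Q-1) * ρ2) - Q * P * ρ12 ^ 2)
    - mm ^ 2 * Q * ρ2 ^ 2 * (1 + (P-1) * ρ1) /
        ((1 + (P-1) * ρ1) * (1 + (Q-1) * ρ2) - Q * P * ρ12 ^ 2) := by
  generalize hE : (1 + (P-1) * ρ1) * (1 + (Q-1) * ρ2) - Q * P * ρ12 ^ 2 = E at *
  generalize hD : (1+(P-1)*ρ1)*(1+(Q-1)*ρ2) - P*Q*ρ12^2 = D at *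
  field_simp
  subst hD
  subst hE
  ring

set_option maxHeartbeats 2000000 in
theorem stmt_9 (N n m : ℕ) (hn : n ≤ N - 1) (hm1 : 1 ≤ m) (hm2 : m ≤ N)
    (ρ1 ρ2 ρ12 : ℝ) (h1 : ρ1 ≠ 1) (h2 : ρ2 ≠ 1)
    (hD1 : 1 + (((N - n : ℕ) : ℝ) - 1) * ρ1 ≠ 0)
    (hD2 : (1 + (((N - n : ℕ) : ℝ) - 1) * ρ1) * (1 + (((N - m : ℕ) : ℝ) - 1) * ρ2)
        - ((N - n : ℕ) : ℝ) * ((N - m : ℕ) : ℝ) * ρ12 ^ 2 ≠ 0) :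
    IsUnit (Rmat (N - n) (N - m) ρ1 ρ2 ρ12) ∧
    ∑ i : Fin m, ∑ j : Fin m,
        ((ρ2 • J m m + (1 - ρ2) • (1 : Matrix (Fin m) (Fin m) ℝ))
          - Bmat m (N - n) (N - m) ρ12 ρ2 * (Rmat (N - n) (N - m) ρ1 ρ2 ρ12)⁻¹ *
            (Bmat m (N - n) (N - m) ρ12 ρ2)ᵀ) i j
      = phi N n m ρ1 ρ2 ρ12 := by
  have hN : 1 ≤ N := le_trans hm1 hm2
  have hnN : n ≤ N := le_trans hn (Nat.sub_le N 1)
  set p : ℕ := N - n with hp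
  set q : ℕ := N - m with hq
  have h1' : (1:ℝ) - ρ1 ≠ 0 := sub_ne_zero.mpr (Ne.symm h1)
  have h2' : (1:ℝ) - ρ2 ≠ 0 := sub_ne_zero.mpr (Ne.symm h2)
  set D2 : ℝ := (1 + ((p:ℝ) - 1) * ρ1) * (1 + ((q:ℝ) - 1) * ρ2) - (p:ℝ) * (q:ℝ) * ρ12 ^ 2
    with hD2def
  have hD2' : D2 ≠ 0 := by
    rw [hD2def]
    intro hcon
    exact hD2 (by linarith [hcon])
  set a : ℝ := ((q:ℝ) * ρ12^2 - ρ1 * (1 + ((q:ℝ) - 1) * ρ2)) / ((1-ρ1) * D2) with hadef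
  set b : ℝ := ((p:ℝ) * ρ12^2 - ρ2 * (1 + ((p:ℝ) - 1) * ρ1)) / ((1-ρ2) * D2) with hbdef
  set c : ℝ := 1/(1-ρ1) with hcdef
  set d : ℝ := 1/(1-ρ2) with hddef
  set e : ℝ := -ρ12/D2 with hedef
  set M : Matrix (Fin p ⊕ Fin q) (Fin p ⊕ Fin q) ℝ :=
    Matrix.fromBlocks (a • J p p + c • 1) (e • J p q) (e • J q p) (b • J q q + d • 1)
    with hMdef
  have hRM : Rmat p q ρ1 ρ2 ρ12 * M = 1 := by
    rw [Rmat, hMdef, Matrix.fromBlocks_multiply, ← Matrix.fromBlocks_one,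
      Matrix.fromBlocks_inj]
    refine ⟨?_, ?_, ?_, ?_⟩
    · apply diagblock
      · rw [hadef, hcdef, hedef]
        field_simp
        rw [hD2def]
        ring
      · rw [hcdef]; field_simp
    · apply offblock
      rw [hbdef, hddef, hedef]
      field_simp
      rw [hD2def]
      ring
    · apply offblock2
      rw [hadef, hcdef, hedef]
      field_simp
      rw [hD2def]
      ring
    · rw [add_comm]
      apply diagblock
      · rw [hbdef, hddef, hedef]
        field_simp
        rw [hD2def]
        ring
      · rw [hddef]; field_simp
  refine ⟨(Matrix.isUnit_iff_isUnit_det _).mpr (Matrix.isUnit_det_of_right_inverse hRM), ?_⟩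
  rw [Matrix.inv_eq_right_inv hRM]
  have hB : Bmat m p q ρ12 ρ2 = Matrix.fromCols (ρ12 • J m p) (ρ2 • J m q) := by
    ext i j
    cases j <;> simp [Bmat, Matrix.fromCols, _root_.J]
  have hBT : (Bmat m p q ρ12 ρ2)ᵀ = Matrix.fromRows (ρ12 • J p m) (ρ2 • J q m) := by
    ext i j
    cases i <;> simp [Bmat, Matrix.fromRows_apply_inl, Matrix.fromRows_apply_inr, _root_.J]
  set s : ℝ := ρ12*(p:ℝ)*(ρ12*(a*(p:ℝ)) + ρ12*c + ρ2*(e*(q:ℝ)))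
      + ρ2*(q:ℝ)*(ρ12*(e*(p:ℝ)) + ρ2*(b*(q:ℝ)) + ρ2*d) with hsdef
  have hBMB : Bmat m p q ρ12 ρ2 * M * (Bmat m p q ρ12 ρ2)ᵀ = s • J m m := by
    rw [hBT, hB, hMdef, Matrix.fromCols_mul_fromBlocks, Matrix.fromCols_mul_fromRows]
    have e1 : (ρ12 • J m p) * (a • J p p + c • (1:Matrix (Fin p) (Fin p) ℝ))
        + (ρ2 • J m q) * (e • J q p) = (ρ12*(a*(p:ℝ)) + ρ12*c + ρ2*(e*(q:ℝ))) • J m p := by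
      simp only [Matrix.add_mul, Matrix.mul_add, Matrix.smul_mul, Matrix.mul_smul, J_mul_J,
        Matrix.mul_one, Matrix.one_mul, smul_smul]
      module
    have e2 : (ρ12 • J m p) * (e • J p q)
        + (ρ2 • J m q) * (b • J q q + d • (1:Matrix (Fin q) (Fin q) ℝ))
        = (ρ12*(e*(p:ℝ)) + ρ2*(b*(q:ℝ)) + ρ2*d) • J m q := by
      simp only [Matrix.add_mul, Matrix.mul_add, Matrix.smul_mul, Matrix.mul_smul, J_mul_J,
        Matrix.mul_one, Matrix.one_mul, smul_smul]
      module
    rw [e1, e2]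
    simp only [Matrix.smul_mul, Matrix.mul_smul, J_mul_J, smul_smul, hsdef]
    module
  rw [hBMB]
  have hsum : ∑ i : Fin m, ∑ j : Fin m,
      ((ρ2 • J m m + (1 - ρ2) • (1 : Matrix (Fin m) (Fin m) ℝ)) - s • J m m) i j
      = (m:ℝ)^2 * ρ2 + (m:ℝ) * (1 - ρ2) - (m:ℝ)^2 * s := by
    simp [Matrix.sub_apply, Matrix.add_apply, Matrix.smul_apply, Matrix.one_apply, _root_.J,
      Finset.sum_ite_eq, Finset.sum_sub_distrib, Finset.sum_add_distrib, Finset.mul_sum]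
    ring
  rw [hsum]
  have hx : ρ12*(a*(p:ℝ)) + ρ12*c + ρ2*(e*(q:ℝ)) = ρ12*(1-ρ2)/D2 := by
    rw [hadef, hcdef, hedef, hD2def]
    exact schur_x (p:ℝ) (q:ℝ) ρ1 ρ2 ρ12 h1' (hD2def ▸ hD2')
  have hy : ρ12*(e*(p:ℝ)) + ρ2*(b*(q:ℝ)) + ρ2*d
      = (ρ2*(1+((p:ℝ)-1)*ρ1) - (p:ℝ)*ρ12^2)/D2 := by
    rw [hbdef, hddef, hedef, hD2def]
    exact schur_y (p:ℝ) (q:ℝ) ρ1 ρ2 ρ12 h2' (hD2def ▸ hD2')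
  have hs' : s = (ρ12^2*(p:ℝ)*(1-ρ2) + ρ2*(q:ℝ)*(ρ2*(1+((p:ℝ)-1)*ρ1) - (p:ℝ)*ρ12^2))/D2 := by
    rw [hsdef, hx, hy]
    field_simp
  rw [hs', hD2def]
  have hPcast : ((p:ℝ)) = (N:ℝ) - (n:ℝ) := by rw [hp]; push_cast [Nat.cast_sub hnN]; ring
  have hQcast : ((q:ℝ)) = (N:ℝ) - (m:ℝ) := by rw [hq]; push_cast [Nat.cast_sub hm2]; ring
  rw [show phi N n m ρ1 ρ2 ρ12 = (m : ℝ) * (1 + ((m : ℝ) - 1) * ρ2)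
    - (m : ℝ) ^ 2 * ((N : ℝ) - (n : ℝ)) * ρ12 ^ 2 / (1 + ((N : ℝ) - (n : ℝ) - 1) * ρ1)
    - (m : ℝ) ^ 2 * ((N : ℝ) - (n : ℝ)) ^ 2 * ((N : ℝ) - (m : ℝ)) * ρ12 ^ 4 /
        ((1 + ((N : ℝ) - (n : ℝ) - 1) * ρ1) * ((1 + ((N : ℝ) - (n : ℝ) - 1) * ρ1) *
          (1 + ((N : ℝ) - (m : ℝ) - 1) * ρ2)
          - ((N : ℝ) - (m : ℝ)) * ((N : ℝ) - (n : ℝ)) * ρ12 ^ 2))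
    + 2 * (m : ℝ) ^ 2 * ((N : ℝ) - (m : ℝ)) * ((N : ℝ) - (n : ℝ)) * ρ2 * ρ12 ^ 2 /
        ((1 + ((N : ℝ) - (n : ℝ) - 1) * ρ1) * (1 + ((N : ℝ) - (m : ℝ) - 1) * ρ2)
          - ((N : ℝ) - (m : ℝ)) * ((N : ℝ) - (n : ℝ)) * ρ12 ^ 2)
    - (m : ℝ) ^ 2 * ((N : ℝ) - (m : ℝ)) * ρ2 ^ 2 * (1 + ((N : ℝ) - (n : ℝ) - 1) * ρ1) /
        ((1 + ((N : ℝ) - (n : ℝ) - 1) * ρ1) * (1 + ((N : ℝ) - (m : ℝ) - 1) * ρ2)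
          - ((N : ℝ) - (m : ℝ)) * ((N : ℝ) - (n : ℝ)) * ρ12 ^ 2) from rfl,
    ← hPcast, ← hQcast]
  have hD2a : (1 + ((p:ℝ) - 1) * ρ1) * (1 + ((q:ℝ) - 1) * ρ2)
      - (q:ℝ) * (p:ℝ) * ρ12 ^ 2 ≠ 0 := by
    intro hcon; exact hD2 (by linarith)
  exact final_scalar (m:ℝ) (p:ℝ) (q:ℝ) ρ1 ρ2 ρ12 hD1 (hD2def ▸ hD2') hD2a
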